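/- arXiv:math/0405460 — 3 statements merged into one kernel-verified Lean document; each statement's English description precedes it below -/
import Mathlib

section
/- The polynomials u²v − u + 1, u²v + uv² − u − v + 1, and uv² − v + 1 in ℤ[u,v] are pairwise non-associate up to multiplication by units and monomials: no two of them are related by f = ± u^i v^j · g in the Laurent polynomial ring ℤ[u^{±1}, v^{±1}]. -/
/-- The two-variable Laurent polynomial ring `ℤ[u^{±1}, v^{±1}]`. -/
abbrev Laurent2 : Type := AddMonoidAlgebra ℤ (ℤ × ℤ)

/-- The monomial `u^i v^j`. -/
noncomputable def mono (i j : ℤ) : Laurent2 := AddMonoidAlgebra.single (i, j) 1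

/-- `u²v − u + 1`. -/
noncomputable def poly1 : Laurent2 := mono 2 1 - mono 1 0 + 1
/-- `u²v + uv² − u − v + 1`. -/
noncomputable def poly2 : Laurent2 := mono 2 1 + mono 1 2 - mono 1 0 - mono 0 1 + 1
/-- `uv² − v + 1`. -/
noncomputable def poly3 : Laurent2 := mono 1 2 - mono 0 1 + 1

/-- `f` and `g` are associate up to multiplication by a sign and a monomial
`± u^i v^j` in `ℤ[u^{±1}, v^{±1}]`. -/
def MonomialAssociated (f g : Laurent2) : Prop :=
  ∃ i j : ℤ, f = mono i j * g ∨ f = -(mono i j * g)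

lemma mono_mul_apply (i j : ℤ) (g : Laurent2) (k : ℤ × ℤ) :
    (mono i j * g).coeff k = g.coeff (-(i, j) + k) := by
  simpa [mono] using AddMonoidAlgebra.coeff_single_mul_apply g (1 : ℤ) ((i, j) : ℤ × ℤ) k

lemma neg_apply' (f : Laurent2) (k : ℤ × ℤ) : (-f).coeff k = -(f.coeff k) := rfl

lemma poly1_eq : poly1.coeff = (Finsupp.single ((2:ℤ),(1:ℤ)) (1:ℤ) - Finsupp.single (1,0) 1
    + Finsupp.single (0,0) 1 : (ℤ×ℤ) →₀ ℤ) := by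
  rw [poly1, mono, mono, AddMonoidAlgebra.one_def]; rfl

lemma poly2_eq : poly2.coeff = (Finsupp.single ((2:ℤ),(1:ℤ)) (1:ℤ) + Finsupp.single (1,2) 1
    - Finsupp.single (1,0) 1 - Finsupp.single (0,1) 1
    + Finsupp.single (0,0) 1 : (ℤ×ℤ) →₀ ℤ) := by
  rw [poly2, mono, mono, mono, mono, AddMonoidAlgebra.one_def]; rfl

lemma poly3_eq : poly3.coeff = (Finsupp.single ((1:ℤ),(2:ℤ)) (1:ℤ) - Finsupp.single (0,1) 1
    + Finsupp.single (0,0) 1 : (ℤ×ℤ) →₀ ℤ) := by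
  rw [poly3, mono, mono, AddMonoidAlgebra.one_def]; rfl

lemma poly1_apply (a b : ℤ) :
    poly1.coeff (a, b) = (if a = 2 ∧ b = 1 then 1 else 0) - (if a = 1 ∧ b = 0 then 1 else 0)
      + (if a = 0 ∧ b = 0 then 1 else 0) := by
  rw [poly1_eq]; simp [Finsupp.single_apply, Prod.ext_iff, eq_comm]

lemma poly2_apply (a b : ℤ) :
    poly2.coeff (a, b) = (if a = 2 ∧ b = 1 then 1 else 0) + (if a = 1 ∧ b = 2 then 1 else 0)
      - (if a = 1 ∧ b = 0 then 1 else 0) - (if a = 0 ∧ b = 1 then 1 else 0)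
      + (if a = 0 ∧ b = 0 then 1 else 0) := by
  rw [poly2_eq]; simp [Finsupp.single_apply, Prod.ext_iff, eq_comm]

lemma poly3_apply (a b : ℤ) :
    poly3.coeff (a, b) = (if a = 1 ∧ b = 2 then 1 else 0) - (if a = 0 ∧ b = 1 then 1 else 0)
      + (if a = 0 ∧ b = 0 then 1 else 0) := by
  rw [poly3_eq]; simp [Finsupp.single_apply, Prod.ext_iff, eq_comm]

set_option maxHeartbeats 1600000 in
/-- The polynomials `u²v − u + 1`, `u²v + uv² − u − v + 1` and `uv² − v + 1`
are pairwise non-associate up to signs and monomials in `ℤ[u^{±1}, v^{±1}]`. -/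
theorem stmt_3 :
    ¬ MonomialAssociated poly1 poly2 ∧ ¬ MonomialAssociated poly1 poly3 ∧
      ¬ MonomialAssociated poly2 poly3 := by
  refine ⟨?_, ?_, ?_⟩
  · rintro ⟨i, j, h | h⟩ <;>
    · have h1 := congrArg (fun p : Laurent2 => p.coeff (i, j)) h
      have h2 := congrArg (fun p : Laurent2 => p.coeff (i, j + 1)) h
      simp only [neg_apply', mono_mul_apply] at h1 h2
      rw [poly1_apply] at h1 h2
      rw [show -((i:ℤ), (j:ℤ)) + (i, j + 1) = ((0:ℤ), (1:ℤ)) by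
          simp [Prod.ext_iff]] at h2
      rw [poly2_apply] at h1 h2
      norm_num at h1 h2
      split_ifs at h1 h2 <;> omega
  · rintro ⟨i, j, h | h⟩ <;>
    · have h1 := congrArg (fun p : Laurent2 => p.coeff (i, j)) h
      have h2 := congrArg (fun p : Laurent2 => p.coeff (i, j + 1)) h
      simp only [neg_apply', mono_mul_apply] at h1 h2
      rw [poly1_apply] at h1 h2
      rw [show -((i:ℤ), (j:ℤ)) + (i, j + 1) = ((0:ℤ), (1:ℤ)) by
          simp [Prod.ext_iff]] at h2
      rw [poly3_apply] at h1 h2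
      norm_num at h1 h2
      split_ifs at h1 h2 <;> omega
  · rintro ⟨i, j, h | h⟩ <;>
    · have h1 := congrArg (fun p : Laurent2 => p.coeff (i, j)) h
      have h2 := congrArg (fun p : Laurent2 => p.coeff (i, j + 1)) h
      have h3 := congrArg (fun p : Laurent2 => p.coeff (2, 1)) h
      simp only [neg_apply', mono_mul_apply] at h1 h2 h3
      rw [poly2_apply] at h1 h2 h3
      rw [show -((i:ℤ), (j:ℤ)) + (i, j + 1) = ((0:ℤ), (1:ℤ)) by
          simp [Prod.ext_iff]] at h2
      rw [show -((i:ℤ), (j:ℤ)) + ((2:ℤ), (1:ℤ)) = ((2 - i : ℤ), (1 - j:ℤ)) by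
          simp [Prod.ext_iff]; omega] at h3
      rw [poly3_apply] at h1 h2 h3
      norm_num at h1 h2 h3
      have hij : i = 0 ∧ j = 0 := by split_ifs at h1 h2 <;> omega
      obtain ⟨rfl, rfl⟩ := hij
      norm_num at h3
end

section
/- Let M be the ℤ[t^{±1}]-module presented by the single relation t²·x = x + t·x on one generator x (i.e., ℤ[t^{±1}]/(t² − t − 1)). Then M is a cyclic module whose 0th characteristic polynomial (order ideal generator) is t² − t − 1, and the direct sum M ⊕ M is not a cyclic ℤ[t^{±1}]-module. -/
open LaurentPolynomial

/-- `t² − t − 1` in `ℤ[t^{±1}]`. -/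
noncomputable def fib : LaurentPolynomial ℤ := T 2 - T 1 - 1

open goldenRatio in
/-- Evaluation of Laurent polynomials at the golden ratio. -/
noncomputable def evalGold : LaurentPolynomial ℤ →ₐ[ℤ] ℝ :=
  AddMonoidAlgebra.lift ℤ ℝ ℤ
    ((Units.coeHom ℝ).comp (zpowersHom ℝˣ (Units.mk0 Real.goldenRatio Real.goldenRatio_ne_zero)))

lemma evalGold_T (n : ℤ) : evalGold (T n) = Real.goldenRatio ^ n := by
  rw [evalGold, T, AddMonoidAlgebra.lift_single]
  show (1 : ℤ) • ((Units.mk0 Real.goldenRatio Real.goldenRatio_ne_zero : ℝˣ) ^ n : ℝˣ) = Real.goldenRatio ^ n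
  simp

lemma evalGold_fib : evalGold fib = 0 := by
  have h2 : evalGold (T 2) = Real.goldenRatio ^ (2 : ℤ) := evalGold_T 2
  have h1 : evalGold (T 1) = Real.goldenRatio ^ (1 : ℤ) := evalGold_T 1
  simp only [fib, map_sub, map_one, h1, h2]
  have := Real.goldenRatio_sq
  push_cast at this ⊢
  rw [zpow_two, zpow_one, ← sq, this]
  ring

lemma fib_not_unit : ¬ IsUnit fib := by
  intro h
  have := h.map evalGold
  rw [evalGold_fib] at this
  exact not_isUnit_zero this

lemma span_fib_ne_top : Ideal.span {fib} ≠ ⊤ := by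
  intro h
  exact fib_not_unit (Ideal.span_singleton_eq_top.mp h)

/-- The `ℤ[t^{±1}]`-module `M = ℤ[t^{±1}]/(t² − t − 1)` is cyclic, its order
ideal (the smallest principal ideal containing the 0th Fitting ideal, which for
a cyclic module is its annihilator) is generated by `t² − t − 1`, and `M ⊕ M`
is not a cyclic `ℤ[t^{±1}]`-module. -/
theorem stmt_9 :
    (⊤ : Submodule (LaurentPolynomial ℤ)
        (LaurentPolynomial ℤ ⧸ Ideal.span {fib})).IsPrincipal ∧
    Module.annihilator (LaurentPolynomial ℤ)
        (LaurentPolynomial ℤ ⧸ Ideal.span {fib}) = Ideal.span {fib} ∧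
    ¬ (⊤ : Submodule (LaurentPolynomial ℤ)
        ((LaurentPolynomial ℤ ⧸ Ideal.span {fib}) ×
          (LaurentPolynomial ℤ ⧸ Ideal.span {fib}))).IsPrincipal := by
  set R := LaurentPolynomial ℤ
  set I : Ideal R := Ideal.span {fib}
  haveI : Nontrivial (R ⧸ I) := Ideal.Quotient.nontrivial_iff.mpr span_fib_ne_top
  refine ⟨⟨1, ?_⟩, Ideal.annihilator_quotient, ?_⟩
  · ext x
    simp only [Submodule.mem_top, true_iff, Submodule.mem_span_singleton]
    obtain ⟨r, rfl⟩ := Ideal.Quotient.mk_surjective x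
    refine ⟨r, ?_⟩
    rw [show (1 : R ⧸ I) = Submodule.Quotient.mk 1 from rfl, ← Submodule.Quotient.mk_smul,
      smul_eq_mul, mul_one, Ideal.Quotient.mk_eq_mk]
  · rintro ⟨⟨a, b⟩, h⟩
    have h1 : ((1 : R ⧸ I), (0 : R ⧸ I)) ∈ Submodule.span R {((a, b) : (R ⧸ I) × (R ⧸ I))} := by
      rw [← h]; trivial
    have h2 : ((0 : R ⧸ I), (1 : R ⧸ I)) ∈ Submodule.span R {((a, b) : (R ⧸ I) × (R ⧸ I))} := by
      rw [← h]; trivial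
    obtain ⟨r, hr⟩ := Submodule.mem_span_singleton.mp h1
    obtain ⟨s, hs⟩ := Submodule.mem_span_singleton.mp h2
    obtain ⟨a', rfl⟩ := Ideal.Quotient.mk_surjective a
    obtain ⟨b', rfl⟩ := Ideal.Quotient.mk_surjective b
    rw [Prod.smul_mk, Prod.mk.injEq, ← Ideal.Quotient.mk_eq_mk, ← Ideal.Quotient.mk_eq_mk,
      ← Submodule.Quotient.mk_smul, ← Submodule.Quotient.mk_smul] at hr hs
    have key : (1 : R ⧸ I) = 0 := by
      calc (1 : R ⧸ I)
          = Submodule.Quotient.mk (r • a') * Submodule.Quotient.mk (s • b') := by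
            rw [hr.1, hs.2, one_mul]
        _ = Submodule.Quotient.mk (r • b') * Submodule.Quotient.mk (s • a') := by
            simp only [Ideal.Quotient.mk_eq_mk, ← map_mul, smul_eq_mul]
            rw [mul_mul_mul_comm, mul_mul_mul_comm r b', mul_comm a' b']
        _ = 0 := by rw [hr.2, hs.1, zero_mul]
    exact one_ne_zero key
end

section
/- In the group with presentation ⟨d | d·d^{u²v} = d^u⟩ where superscripts denote a ℤ²-action by automorphisms (i.e., the ℤ[u^{±1},v^{±1}]-module presented by the relation (1 + u²v − u)·d = 0 after abelianization), the abelianization is ℤ[u^{±1},v^{±1}]/(u²v − u + 1), and this module is not isomorphic to ℤ[u^{±1},v^{±1}]/(uv² − v + 1) as a module over ℤ[u^{±1},v^{±1}]. -/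
noncomputable def evalHom : Laurent2 →ₐ[ℤ] ℚ :=
  AddMonoidAlgebra.lift ℤ ℚ (ℤ × ℤ)
    { toFun := fun m => (-1 : ℚ) ^ (Multiplicative.toAdd m).1 *
        (-2 : ℚ) ^ (Multiplicative.toAdd m).2
      map_one' := by simp
      map_mul' := by
        intro x y
        simp only [toAdd_mul, Prod.fst_add, Prod.snd_add]
        rw [zpow_add₀ (by norm_num : (-1:ℚ) ≠ 0), zpow_add₀ (by norm_num : (-2:ℚ) ≠ 0)]
        ring }

lemma evalHom_mono (i j : ℤ) : evalHom (mono i j) = (-1 : ℚ) ^ i * (-2 : ℚ) ^ j := by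
  simp [evalHom, mono, AddMonoidAlgebra.lift_single]

lemma ideal_eq_of_equiv {R : Type*} [CommRing R] {I J : Ideal R}
    (e : (R ⧸ I) ≃ₗ[R] (R ⧸ J)) : I ≤ J := by
  intro r hr
  obtain ⟨a, ha⟩ := Ideal.Quotient.mk_surjective (e.symm 1)
  have h1 : r • ((Ideal.Quotient.mk I) a) = 0 := by
    have : r • ((Ideal.Quotient.mk I) a) = (Ideal.Quotient.mk I) (r * a) := rfl
    rw [this]
    exact (Ideal.Quotient.eq_zero_iff_mem).2 (I.mul_mem_right a hr)
  have h2 : e (r • e.symm 1) = 0 := by rw [← ha, h1, map_zero]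
  rw [map_smul, e.apply_symm_apply] at h2
  have : (Ideal.Quotient.mk J) r = 0 := by
    have h3 : r • (1 : R ⧸ J) = Ideal.Quotient.mk J (r * 1) := rfl
    rw [h3, mul_one] at h2
    exact h2
  exact Ideal.Quotient.eq_zero_iff_mem.1 this

/-- The abelianization of `⟨d ∣ d·d^{u²v} = d^u⟩` is the cyclic module
`ℤ[u^{±1},v^{±1}]/(u²v − u + 1)`, and it is not isomorphic to
`ℤ[u^{±1},v^{±1}]/(uv² − v + 1)` as a `ℤ[u^{±1},v^{±1}]`-module. -/
theorem stmt_12 :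
    ¬ Nonempty ((Laurent2 ⧸ Ideal.span {mono 2 1 - mono 1 0 + 1}) ≃ₗ[Laurent2]
      (Laurent2 ⧸ Ideal.span {mono 1 2 - mono 0 1 + 1})) := by
  rintro ⟨e⟩
  have hle := ideal_eq_of_equiv e.symm
  have hmem : (mono 1 2 - mono 0 1 + 1 : Laurent2) ∈
      Ideal.span {mono 2 1 - mono 1 0 + 1} :=
    hle (Ideal.subset_span rfl)
  obtain ⟨c, hc⟩ := Ideal.mem_span_singleton'.1 hmem
  have hp : evalHom (mono 2 1 - mono 1 0 + 1) = 0 := by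
    simp [evalHom_mono]; norm_num
  have hq : evalHom (mono 1 2 - mono 0 1 + 1) = -1 := by
    simp [evalHom_mono]; norm_num
  have := congrArg evalHom hc
  rw [map_mul, hp, mul_zero, hq] at this
  norm_num at this
end
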